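/- Let A be a supercommutative ring and v an odd derivation of A with v∘v = 0. If there exists an odd element θ ∈ A with v(θ) = 1, then every element a ∈ A can be written uniquely as a = b + cθ with b, c ∈ ker(v); that is, the natural ring homomorphism (ker v)[θ] → A (with θ an odd polynomial variable) is an isomorphism. -/
import Mathlib


/-- A supercommutative ring: a ring `A` with a `ℤ/2`-grading `A = ev ⊕ odd`
such that even elements are central, odd elements anticommute and square to zero. -/
class SuperGrading (A : Type*) [Ring A] where
  ev : AddSubgroup A
  odd : AddSubgroup A
  one_mem_ev : (1 : A) ∈ ev
  decomp : ∀ a : A, ∃ a₀ ∈ ev, ∃ a₁ ∈ odd, a = a₀ + a₁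
  decomp_unique : ∀ a₀ ∈ ev, ∀ a₁ ∈ odd, a₀ + a₁ = 0 → a₀ = 0 ∧ a₁ = 0
  mul_ev_ev : ∀ a ∈ ev, ∀ b ∈ ev, a * b ∈ ev
  mul_ev_odd : ∀ a ∈ ev, ∀ b ∈ odd, a * b ∈ odd
  mul_odd_ev : ∀ a ∈ odd, ∀ b ∈ ev, a * b ∈ odd
  mul_odd_odd : ∀ a ∈ odd, ∀ b ∈ odd, a * b ∈ ev
  comm_ev_ev : ∀ a ∈ ev, ∀ b ∈ ev, a * b = b * a
  comm_ev_odd : ∀ a ∈ ev, ∀ b ∈ odd, a * b = b * a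
  anticomm_odd : ∀ a ∈ odd, ∀ b ∈ odd, a * b = -(b * a)
  odd_sq : ∀ a ∈ odd, a * a = 0

open SuperGrading

/-- An odd derivation of a supercommutative ring, with square zero. -/
structure OddDer (A : Type*) [Ring A] [SuperGrading A] where
  v : A → A
  map_add : ∀ a b : A, v (a + b) = v a + v b
  map_ev : ∀ a ∈ ev (A := A), v a ∈ odd (A := A)
  map_odd : ∀ a ∈ odd (A := A), v a ∈ ev (A := A)
  leib_ev : ∀ a ∈ ev (A := A), ∀ b : A, v (a * b) = v a * b + a * v b
  leib_odd : ∀ a ∈ odd (A := A), ∀ b : A, v (a * b) = v a * b - a * v b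
  sq_zero : ∀ a : A, v (v a) = 0

/-- if `v θ = 1` for an odd `θ`, every element of `A` is uniquely
of the form `b + c * θ` with `b, c ∈ ker v`, i.e. `(ker v)[θ] ≅ A`. -/
theorem stmt0 {A : Type*} [Ring A] [SuperGrading A] (D : OddDer A)
    (θ : A) (hθ : θ ∈ odd (A := A)) (hvθ : D.v θ = 1) :
    ∀ a : A, ∃! p : A × A, D.v p.1 = 0 ∧ D.v p.2 = 0 ∧ a = p.1 + p.2 * θ := by
  have v0 : D.v 0 = 0 := by
    have h := D.map_add 0 0
    rw [add_zero] at h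
    exact left_eq_add.mp h
  have vsub : ∀ x y : A, D.v (x - y) = D.v x - D.v y := by
    intro x y
    have h := D.map_add (x - y) y
    rw [sub_add_cancel] at h
    exact eq_sub_of_add_eq h.symm
  -- θ * D.v x = D.v (x₁ - x₀) * θ  for the decomposition x = x₀ + x₁
  have key : ∀ x x₀ x₁ : A, x₀ ∈ ev (A := A) → x₁ ∈ odd (A := A) → x = x₀ + x₁ →
      D.v (x₁ - x₀) * θ = θ * D.v x := by
    intro x x₀ x₁ h0 h1 hx
    have hv0 : D.v x₀ ∈ odd (A := A) := D.map_ev _ h0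
    have hv1 : D.v x₁ ∈ ev (A := A) := D.map_odd _ h1
    have hvx : D.v x = D.v x₀ + D.v x₁ := by rw [hx]; exact D.map_add _ _
    have hA : θ * D.v x₀ = -(D.v x₀ * θ) := anticomm_odd θ hθ _ hv0
    have hC : D.v x₁ * θ = θ * D.v x₁ := comm_ev_odd _ hv1 θ hθ
    rw [vsub, hvx, mul_add, hA, sub_mul, hC]
    abel
  -- uniqueness core
  have uniq : ∀ e d : A, D.v e = 0 → D.v d = 0 → e + d * θ = 0 → e = 0 ∧ d = 0 := by
    intro e d hve hvd hsum
    obtain ⟨d₀, h0, d₁, h1, hd⟩ := decomp d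
    have hvd' : D.v d₁ + D.v d₀ = 0 := by
      have := D.map_add d₀ d₁
      rw [← hd, hvd] at this
      rw [add_comm]
      exact this.symm
    obtain ⟨hvd1, hvd0⟩ := decomp_unique _ (D.map_odd _ h1) _ (D.map_ev _ h0) hvd'
    have hvd0th : D.v (d₀ * θ) = d₀ := by
      rw [D.leib_ev _ h0 θ, hvd0, hvθ, zero_mul, mul_one, zero_add]
    have hvd1th : D.v (d₁ * θ) = -d₁ := by
      rw [D.leib_odd _ h1 θ, hvd1, hvθ, zero_mul, mul_one, zero_sub]
    have hvdth : D.v (d * θ) = d₀ - d₁ := by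
      rw [hd, add_mul, D.map_add, hvd0th, hvd1th, sub_eq_add_neg]
    have h01 : d₀ - d₁ = 0 := by
      have := D.map_add e (d * θ)
      rw [hsum, v0, hve, hvdth, zero_add] at this
      exact this.symm
    have hd0 : d₀ = d₁ := sub_eq_zero.mp h01
    have : d₀ + -d₀ = 0 := add_neg_cancel d₀
    obtain ⟨hz0, -⟩ := decomp_unique d₀ h0 (-d₀) (by rw [hd0]; exact neg_mem h1) this
    have hdz : d = 0 := by rw [hd, hz0, hd0.symm, hz0, add_zero]
    constructor
    · have := hsum; rw [hdz, zero_mul, add_zero] at this; exact this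
    · exact hdz
  intro a
  obtain ⟨a₀, h0, a₁, h1, ha⟩ := decomp a
  set b : A := D.v (θ * a) with hb
  set c : A := D.v (a₁ - a₀) with hc
  have hvb : D.v b = 0 := D.sq_zero _
  have hvc : D.v c = 0 := D.sq_zero _
  have hbeq : b = a - θ * D.v a := by
    rw [hb, D.leib_odd θ hθ a, hvθ, one_mul]
  have hsum : a = b + c * θ := by
    rw [hbeq, key a a₀ a₁ h0 h1 ha]
    abel
  refine ⟨(b, c), ⟨hvb, hvc, hsum⟩, ?_⟩
  rintro ⟨b', c'⟩ ⟨hvb', hvc', hsum'⟩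
  have hzero : (b' - b) + (c' - c) * θ = 0 := by
    rw [sub_mul]
    have : b' + c' * θ = b + c * θ := by rw [← hsum', ← hsum]
    rw [sub_add_sub_comm, this, sub_self]
  obtain ⟨he, hdz⟩ := uniq _ _ (by rw [vsub, hvb', hvb, sub_zero])
    (by rw [vsub, hvc', hvc, sub_zero]) hzero
  have h1' : b' = b := sub_eq_zero.mp he
  have h2' : c' = c := sub_eq_zero.mp hdz
  rw [Prod.mk.injEq]
  exact ⟨h1', h2'⟩
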